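/- Let d,m≥1, let F:ℝ^d→ℝ^{d×m} be a matrix-valued map whose entries are affine functions of x, let G∈ℝ^{m×m} be antisymmetric and invertible, let u₀∈ℝ^m, and let T₀>0. Then there exist C>0 and ε₀>0 such that for every ε∈(0,ε₀), the solution x of the ordinary differential equation ẋ(t)=F(x(t))·e^{(t/ε)G}u₀ with x(0)=0 exists on [0,T₀] and satisfies ‖x(t)‖≤Cε for every t∈[0,T₀]. -/

import Mathlib

open Matrix

section Helpers

open Set intervalIntegral

/-- Global Picard–Lindelöf: a time-dependent vector field, continuous and uniformly Lipschitz
in the space variable, admits a global solution on `[0, T]` starting at `0`. -/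
theorem global_picard {E : Type*} [NormedAddCommGroup E] [NormedSpace ℝ E] [CompleteSpace E]
    (f : ℝ → E → E) (K : NNReal) (hcont : Continuous (Function.uncurry f))
    (hlip : ∀ t, LipschitzWith K (f t)) (T : ℝ) (hT : 0 < T) :
    ∃ x : ℝ → E, x 0 = 0 ∧ Continuous x ∧
      ∀ t ∈ Set.Icc (0 : ℝ) T, HasDerivAt x (f t (x t)) t := by
  set I := Icc (0 : ℝ) T with hI
  set π : ℝ → I := fun s => Set.projIcc 0 T hT.le s with hπdef
  have hπcont : Continuous π := continuous_projIcc
  have hπ : ∀ s (hs : s ∈ I), π s = ⟨s, hs⟩ := fun s hs => Set.projIcc_of_mem hT.le hs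
  have hv : ∀ g : C(I, E), Continuous (fun s : ℝ => f s (g (π s))) := fun g =>
    hcont.comp (continuous_id.prodMk ((map_continuous g).comp hπcont))
  have hPd : ∀ (g : C(I, E)) (t : ℝ),
      HasDerivAt (fun τ : ℝ => ∫ s in (0 : ℝ)..τ, f s (g (π s))) (f t (g (π t))) t :=
    fun g t => ((hv g).integral_hasStrictDerivAt 0 t).hasDerivAt
  have hPc : ∀ g : C(I, E), Continuous (fun τ : ℝ => ∫ s in (0 : ℝ)..τ, f s (g (π s))) :=
    fun g => continuous_iff_continuousAt.2 fun t => (hPd g t).continuousAt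
  set Φ : C(I, E) → C(I, E) := fun g =>
    ⟨fun t : I => ∫ s in (0 : ℝ)..(t : ℝ), f s (g (π s)), (hPc g).comp continuous_subtype_val⟩
    with hΦdef
  have key : ∀ (n : ℕ) (g₁ g₂ : C(I, E)) (t : I),
      dist ((Φ^[n] g₁) t) ((Φ^[n] g₂) t) ≤ ((K : ℝ) * t) ^ n / n.factorial * dist g₁ g₂ := by
    intro n
    induction n with
    | zero =>
      intro g₁ g₂ t
      simpa using ContinuousMap.dist_apply_le_dist t
    | succ n ih =>
      intro g₁ g₂ t
      have ht0 : (0 : ℝ) ≤ t := t.2.1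
      have htT : (t : ℝ) ≤ T := t.2.2
      rw [Function.iterate_succ_apply', Function.iterate_succ_apply']
      set G₁ := Φ^[n] g₁
      set G₂ := Φ^[n] g₂
      set D := dist g₁ g₂ with hD
      have hD0 : 0 ≤ D := dist_nonneg
      have h12 : (Φ G₁) t = ∫ s in (0 : ℝ)..(t : ℝ), f s (G₁ (π s)) := rfl
      have h22 : (Φ G₂) t = ∫ s in (0 : ℝ)..(t : ℝ), f s (G₂ (π s)) := rfl
      rw [dist_eq_norm, h12, h22,
        ← intervalIntegral.integral_sub ((hv G₁).intervalIntegrable _ _)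
          ((hv G₂).intervalIntegrable _ _)]
      have hnormcont : Continuous fun s : ℝ => ‖f s (G₁ (π s)) - f s (G₂ (π s))‖ :=
        ((hv G₁).sub (hv G₂)).norm
      have step1 : ‖∫ s in (0 : ℝ)..(t : ℝ), (f s (G₁ (π s)) - f s (G₂ (π s)))‖ ≤
          ∫ s in (0 : ℝ)..(t : ℝ), ‖f s (G₁ (π s)) - f s (G₂ (π s))‖ :=
        intervalIntegral.norm_integral_le_integral_norm ht0
      have step2 : (∫ s in (0 : ℝ)..(t : ℝ), ‖f s (G₁ (π s)) - f s (G₂ (π s))‖) ≤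
          ∫ s in (0 : ℝ)..(t : ℝ), (K : ℝ) ^ (n + 1) * D / n.factorial * s ^ n := by
        apply intervalIntegral.integral_mono_on ht0 (hnormcont.intervalIntegrable _ _)
          ((continuous_const.mul (continuous_pow n)).intervalIntegrable _ _)
        intro s hs
        have hsI : s ∈ I := ⟨hs.1, hs.2.trans htT⟩
        have h1 : ‖f s (G₁ (π s)) - f s (G₂ (π s))‖ ≤ (K : ℝ) * dist (G₁ (π s)) (G₂ (π s)) := by
          rw [← dist_eq_norm]
          exact (hlip s).dist_le_mul _ _
        have h2 : dist (G₁ (π s)) (G₂ (π s)) ≤ ((K : ℝ) * s) ^ n / n.factorial * D := by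
          rw [hπ s hsI]
          simpa using ih g₁ g₂ ⟨s, hsI⟩
        calc ‖f s (G₁ (π s)) - f s (G₂ (π s))‖ ≤ (K : ℝ) * dist (G₁ (π s)) (G₂ (π s)) := h1
          _ ≤ (K : ℝ) * (((K : ℝ) * s) ^ n / n.factorial * D) := by
              exact mul_le_mul_of_nonneg_left h2 K.coe_nonneg
          _ = (K : ℝ) ^ (n + 1) * D / n.factorial * s ^ n := by
              rw [mul_pow]; ring
      have step3 : (∫ s in (0 : ℝ)..(t : ℝ), (K : ℝ) ^ (n + 1) * D / n.factorial * s ^ n) =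
          ((K : ℝ) * t) ^ (n + 1) / (n + 1).factorial * D := by
        rw [intervalIntegral.integral_const_mul, integral_pow, mul_pow]
        rw [Nat.factorial_succ]
        have hnf : (n.factorial : ℝ) ≠ 0 := Nat.cast_ne_zero.2 n.factorial_ne_zero
        have hn1 : ((n : ℝ) + 1) ≠ 0 := by positivity
        push_cast
        field_simp
        ring
      calc ‖∫ s in (0 : ℝ)..(t : ℝ), (f s (G₁ (π s)) - f s (G₂ (π s)))‖ ≤ _ := step1
        _ ≤ _ := step2
        _ = ((K : ℝ) * t) ^ (n + 1) / (n + 1).factorial * D := step3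
  have hKT0 : 0 ≤ (K : ℝ) * T := mul_nonneg K.coe_nonneg hT.le
  obtain ⟨N, hN⟩ := ((FloorSemiring.tendsto_pow_div_factorial_atTop ((K : ℝ) * T)).eventually
    (gt_mem_nhds zero_lt_one)).exists
  have hq0 : (0 : ℝ) ≤ ((K : ℝ) * T) ^ N / N.factorial := by positivity
  have hΦlip : LipschitzWith ⟨((K : ℝ) * T) ^ N / N.factorial, hq0⟩ (Φ^[N]) := by
    apply LipschitzWith.of_dist_le_mul
    intro g₁ g₂
    rw [ContinuousMap.dist_le (by positivity)]
    intro t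
    refine (key N g₁ g₂ t).trans ?_
    have h1 : ((K : ℝ) * t) ^ N ≤ ((K : ℝ) * T) ^ N :=
      pow_le_pow_left₀ (mul_nonneg K.coe_nonneg t.2.1)
        (mul_le_mul_of_nonneg_left t.2.2 K.coe_nonneg) N
    have h2 : ((K : ℝ) * t) ^ N / N.factorial ≤ ((K : ℝ) * T) ^ N / N.factorial := by
      apply div_le_div_of_nonneg_right h1 ?_ |>.trans_eq rfl
      positivity
    exact mul_le_mul_of_nonneg_right h2 dist_nonneg
  haveI : Nonempty C(I, E) := ⟨ContinuousMap.const _ 0⟩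
  have hcontr : ContractingWith ⟨((K : ℝ) * T) ^ N / N.factorial, hq0⟩ (Φ^[N]) :=
    ⟨by exact_mod_cast hN, hΦlip⟩
  obtain ⟨g, hg⟩ : ∃ g : C(I, E), Φ g = g := ⟨_, hcontr.isFixedPt_fixedPoint_iterate⟩
  refine ⟨fun τ : ℝ => ∫ s in (0 : ℝ)..τ, f s (g (π s)), by simp, hPc g, ?_⟩
  intro t ht
  have hxg : ∀ s (hs : s ∈ I), (∫ σ in (0 : ℝ)..s, f σ (g (π σ))) = g ⟨s, hs⟩ := by
    intro s hs
    have : (Φ g) ⟨s, hs⟩ = g ⟨s, hs⟩ := by rw [hg]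
    simpa [hΦdef] using this
  have := hPd g t
  have heq : f t (g (π t)) = f t (∫ s in (0 : ℝ)..t, f s (g (π s))) := by
    rw [hπ t ht, hxg t ht]
  rwa [heq] at this

/-- Derivative of `s ↦ exp(s • A) *ᵥ v`. -/
theorem hasDerivAt_exp_mulVec {n : ℕ} (A : Matrix (Fin n) (Fin n) ℝ) (v : Fin n → ℝ) (t : ℝ) :
    HasDerivAt (fun s : ℝ => (NormedSpace.exp (s • A)).mulVec v)
      (A.mulVec ((NormedSpace.exp (t • A)).mulVec v)) t := by
  letI : SeminormedRing (Matrix (Fin n) (Fin n) ℝ) := Matrix.linftyOpSemiNormedRing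
  letI : NormedRing (Matrix (Fin n) (Fin n) ℝ) := Matrix.linftyOpNormedRing
  letI : NormedAlgebra ℝ (Matrix (Fin n) (Fin n) ℝ) := Matrix.linftyOpNormedAlgebra
  have h := hasDerivAt_exp_smul_const' (𝕂 := ℝ) A t
  let L : Matrix (Fin n) (Fin n) ℝ →ₗ[ℝ] (Fin n → ℝ) :=
    { toFun := fun M => M.mulVec v
      map_add' := fun M N => Matrix.add_mulVec M N v
      map_smul' := fun r M => Matrix.smul_mulVec r M v }
  have hc := (L.toContinuousLinearMap.hasFDerivAt
    (x := NormedSpace.exp (t • A))).comp_hasDerivAt t h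
  rw [Matrix.mulVec_mulVec]
  convert hc using 1 <;> rfl

/-- The exponential of a skew-symmetric matrix preserves the Euclidean inner product. -/
theorem exp_skew_dotProduct {n : ℕ} (A : Matrix (Fin n) (Fin n) ℝ) (hA : Aᵀ = -A)
    (v : Fin n → ℝ) (t : ℝ) :
    ((NormedSpace.exp (t • A)).mulVec v) ⬝ᵥ ((NormedSpace.exp (t • A)).mulVec v) = v ⬝ᵥ v := by
  set E := NormedSpace.exp (t • A) with hE
  have h1 : Eᵀ * E = 1 := by
    rw [hE, ← Matrix.exp_transpose, Matrix.transpose_smul, hA, smul_neg,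
      ← Matrix.exp_add_of_commute (-(t • A)) (t • A) (Commute.neg_left (Commute.refl _))]
    simp
  calc (E.mulVec v) ⬝ᵥ (E.mulVec v) = ((E.mulVec v) ᵥ* E) ⬝ᵥ v := Matrix.dotProduct_mulVec _ _ _
    _ = (Eᵀ.mulVec (E.mulVec v)) ⬝ᵥ v := by rw [Matrix.mulVec_transpose]
    _ = ((Eᵀ * E).mulVec v) ⬝ᵥ v := by rw [Matrix.mulVec_mulVec]
    _ = v ⬝ᵥ v := by rw [h1, Matrix.one_mulVec]

/-- A linear functional on `Fin n → ℝ` is determined by its values on the basis. -/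
theorem lin_apply_eq_sum {n : ℕ} (L : (Fin n → ℝ) →ₗ[ℝ] ℝ) (v : Fin n → ℝ) :
    L v = ∑ k, v k * L (Pi.single k 1) := by
  conv_lhs => rw [← Finset.univ_sum_single v]
  rw [map_sum]
  refine Finset.sum_congr rfl fun k _ => ?_
  have h : v k • (Pi.single k 1 : Fin n → ℝ) = Pi.single k (v k) := by
    rw [← Pi.single_smul]
    norm_num
  rw [← h, L.map_smul, smul_eq_mul]

end Helpers

/-- Averaging estimate for a control system driven by a rapidly rotating control: if `F` has
affine entries, `G` is antisymmetric and invertible, then the solution of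
`ẋ = F(x)·e^{(t/ε)G}u₀`, `x(0)=0`, stays at distance `≤ Cε` of the origin on `[0,T₀]`. -/
theorem stmt_7 (d m : ℕ) (hd : 1 ≤ d) (hm : 1 ≤ m)
    (F : (Fin d → ℝ) → Matrix (Fin d) (Fin m) ℝ)
    (hF : ∀ i j, ∃ (L : (Fin d → ℝ) →ₗ[ℝ] ℝ) (c : ℝ), ∀ x, F x i j = L x + c)
    (G : Matrix (Fin m) (Fin m) ℝ) (hGanti : Gᵀ = -G) (hGinv : IsUnit G)
    (u₀ : Fin m → ℝ) (T₀ : ℝ) (hT₀ : 0 < T₀) :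
    ∃ C > (0 : ℝ), ∃ ε₀ > (0 : ℝ), ∀ ε : ℝ, 0 < ε → ε < ε₀ →
      ∃ x : ℝ → Fin d → ℝ, x 0 = 0 ∧
        (∀ t ∈ Set.Icc (0 : ℝ) T₀, ∀ i : Fin d,
          HasDerivAt (fun s => x s i)
            ((F (x t)).mulVec ((NormedSpace.exp ((t / ε) • G)).mulVec u₀) i) t) ∧
        ∀ t ∈ Set.Icc (0 : ℝ) T₀, Real.sqrt (∑ i, (x t i) ^ 2) ≤ C * ε := by
  classical
  choose L c hLc using hF
  set NL : Fin d → Fin m → ℝ := fun i j => ∑ k, |L i j (Pi.single k 1)| with hNLdef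
  have hNL0 : ∀ i j, 0 ≤ NL i j := fun i j => Finset.sum_nonneg fun k _ => abs_nonneg _
  set SL : ℝ := ∑ i, ∑ j, NL i j with hSLdef
  have hSL0 : 0 ≤ SL := Finset.sum_nonneg fun i _ => Finset.sum_nonneg fun j _ => hNL0 i j
  set SC : ℝ := ∑ i, ∑ j, |c i j| with hSCdef
  have hSC0 : 0 ≤ SC := Finset.sum_nonneg fun i _ => Finset.sum_nonneg fun j _ => abs_nonneg _
  set U : ℝ := Real.sqrt (∑ k, (u₀ k) ^ 2) with hUdef
  have hU0 : 0 ≤ U := Real.sqrt_nonneg _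
  have hrowNL : ∀ i, ∑ j, NL i j ≤ SL := fun i =>
    Finset.single_le_sum (f := fun i => ∑ j, NL i j)
      (fun i _ => Finset.sum_nonneg fun j _ => hNL0 i j) (Finset.mem_univ i)
  have hrowC : ∀ i, ∑ j, |c i j| ≤ SC := fun i =>
    Finset.single_le_sum (f := fun i => ∑ j, |c i j|)
      (fun i _ => Finset.sum_nonneg fun j _ => abs_nonneg _) (Finset.mem_univ i)
  have hLb : ∀ i j (y : Fin d → ℝ), |L i j y| ≤ NL i j * ‖y‖ := by
    intro i j y
    calc |L i j y| = |∑ k, y k * L i j (Pi.single k 1)| := by rw [lin_apply_eq_sum]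
      _ ≤ ∑ k, |y k * L i j (Pi.single k 1)| := Finset.abs_sum_le_sum_abs _ _
      _ ≤ ∑ k, ‖y‖ * |L i j (Pi.single k 1)| := by
          refine Finset.sum_le_sum fun k _ => ?_
          rw [abs_mul]
          exact mul_le_mul_of_nonneg_right (by simpa using norm_le_pi_norm y k) (abs_nonneg _)
      _ = NL i j * ‖y‖ := by rw [← Finset.mul_sum, hNLdef, mul_comm]
  have hGdet : IsUnit G.det := (Matrix.isUnit_iff_isUnit_det G).1 hGinv
  have hGiG : G⁻¹ * G = 1 := Matrix.nonsing_inv_mul G hGdet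
  set CG : ℝ := ∑ j, ∑ k, |G⁻¹ j k| with hCGdef
  have hCG0 : 0 ≤ CG := Finset.sum_nonneg fun j _ => Finset.sum_nonneg fun k _ => abs_nonneg _
  have hrowG : ∀ j, ∑ k, |G⁻¹ j k| ≤ CG := fun j =>
    Finset.single_le_sum (f := fun j => ∑ k, |G⁻¹ j k|)
      (fun j _ => Finset.sum_nonneg fun k _ => abs_nonneg _) (Finset.mem_univ j)
  set K1 : ℝ := SL * U + 1 with hK1def
  have hK10 : 0 < K1 := by
    have := mul_nonneg hSL0 hU0
    rw [hK1def]; linarith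
  set K2 : ℝ := SC * U + 1 with hK2def
  have hK20 : 0 < K2 := by
    have := mul_nonneg hSC0 hU0
    rw [hK2def]; linarith
  set B : ℝ := K2 / K1 * Real.exp (K1 * T₀) with hBdef
  have hB0 : 0 ≤ B := by
    rw [hBdef]
    exact mul_nonneg (div_nonneg hK20.le hK10.le) (Real.exp_pos _).le
  set DB : ℝ := K1 * B + K2 with hDBdef
  have hDB0 : 0 ≤ DB := by
    rw [hDBdef]
    exact add_nonneg (mul_nonneg hK10.le hB0) hK20.le
  set W : ℝ := CG * U with hWdef
  have hW0 : 0 ≤ W := mul_nonneg hCG0 hU0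
  set C1 : ℝ := W * (SL * B + SC) * 2 + T₀ * (W * SL * DB) with hC1def
  have hC10 : 0 ≤ C1 := by
    have h1 : 0 ≤ W * (SL * B + SC) * 2 :=
      mul_nonneg (mul_nonneg hW0 (add_nonneg (mul_nonneg hSL0 hB0) hSC0)) (by norm_num)
    have h2 : 0 ≤ T₀ * (W * SL * DB) :=
      mul_nonneg hT₀.le (mul_nonneg (mul_nonneg hW0 hSL0) hDB0)
    rw [hC1def]; linarith
  have hCpos : (0 : ℝ) < Real.sqrt d * C1 + 1 := by
    have : 0 ≤ Real.sqrt d * C1 := mul_nonneg (Real.sqrt_nonneg _) hC10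
    linarith
  refine ⟨Real.sqrt d * C1 + 1, hCpos, 1, one_pos, ?_⟩
  intro ε hε hε1
  set A : Matrix (Fin m) (Fin m) ℝ := ε⁻¹ • G with hAdef
  have hAt : Aᵀ = -A := by rw [hAdef, Matrix.transpose_smul, hGanti, smul_neg]
  have hsm : ∀ t : ℝ, (t / ε) • G = t • A := fun t => by
    rw [hAdef, smul_smul, div_eq_mul_inv]
  set u : ℝ → Fin m → ℝ := fun s => (NormedSpace.exp (s • A)).mulVec u₀ with hudef
  have hu' : ∀ s, HasDerivAt u (A.mulVec (u s)) s := fun s => hasDerivAt_exp_mulVec A u₀ s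
  have hucont : Continuous u := continuous_iff_continuousAt.2 fun s => (hu' s).continuousAt
  have huU : ∀ s k, |u s k| ≤ U := by
    intro s k
    have hdot : u s ⬝ᵥ u s = u₀ ⬝ᵥ u₀ := exp_skew_dotProduct A hAt u₀ s
    have e1 : ∀ v : Fin m → ℝ, v ⬝ᵥ v = ∑ k', (v k') ^ 2 := fun v => by
      simp [dotProduct, sq]
    have h2 : ∑ k', (u s k') ^ 2 = ∑ k', (u₀ k') ^ 2 := by
      rw [← e1, ← e1, hdot]
    have h1 : (u s k) ^ 2 ≤ ∑ k', (u s k') ^ 2 :=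
      Finset.single_le_sum (f := fun k' => (u s k') ^ 2) (fun _ _ => sq_nonneg _)
        (Finset.mem_univ k)
    calc |u s k| = Real.sqrt ((u s k) ^ 2) := (Real.sqrt_sq_eq_abs _).symm
      _ ≤ Real.sqrt (∑ k', (u₀ k') ^ 2) := Real.sqrt_le_sqrt (by rw [← h2]; exact h1)
      _ = U := by rw [hUdef]
  set f : ℝ → (Fin d → ℝ) → (Fin d → ℝ) := fun t y => (F y).mulVec (u t) with hfdef
  have hfi : ∀ t y i, f t y i = ∑ j, (L i j y + c i j) * u t j := by
    intro t y i
    simp only [hfdef, Matrix.mulVec, dotProduct]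
    exact Finset.sum_congr rfl fun j _ => by rw [hLc]
  have hfb : ∀ t y, ‖f t y‖ ≤ K1 * ‖y‖ + K2 := by
    intro t y
    have h0 : 0 ≤ K1 * ‖y‖ + K2 := add_nonneg (mul_nonneg hK10.le (norm_nonneg y)) hK20.le
    rw [pi_norm_le_iff_of_nonneg h0]
    intro i
    rw [Real.norm_eq_abs, hfi]
    calc |∑ j, (L i j y + c i j) * u t j| ≤ ∑ j, |(L i j y + c i j) * u t j| :=
        Finset.abs_sum_le_sum_abs _ _
      _ ≤ ∑ j, (NL i j * ‖y‖ + |c i j|) * U := by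
          refine Finset.sum_le_sum fun j _ => ?_
          rw [abs_mul]
          have h1 : |L i j y + c i j| ≤ NL i j * ‖y‖ + |c i j| :=
            (abs_add_le _ _).trans (add_le_add_left (hLb i j y) _)
          have h2 : 0 ≤ NL i j * ‖y‖ + |c i j| :=
            add_nonneg (mul_nonneg (hNL0 i j) (norm_nonneg _)) (abs_nonneg _)
          exact mul_le_mul h1 (huU t j) (abs_nonneg _) h2
      _ = (∑ j, NL i j) * ‖y‖ * U + (∑ j, |c i j|) * U := by
          simp only [add_mul]
          rw [Finset.sum_add_distrib, ← Finset.sum_mul, ← Finset.sum_mul, ← Finset.sum_mul]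
      _ ≤ SL * ‖y‖ * U + SC * U := by
          have h3 := mul_le_mul_of_nonneg_right
            (mul_le_mul_of_nonneg_right (hrowNL i) (norm_nonneg y)) hU0
          have h4 := mul_le_mul_of_nonneg_right (hrowC i) hU0
          linarith
      _ ≤ K1 * ‖y‖ + K2 := by
          rw [hK1def, hK2def]
          have h5 : SL * ‖y‖ * U = SL * U * ‖y‖ := by ring
          have h6 : 0 ≤ ‖y‖ := norm_nonneg y
          nlinarith
  have hflip : ∀ t, LipschitzWith (Real.toNNReal (SL * U)) (f t) := by
    intro t
    apply LipschitzWith.of_dist_le_mul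
    intro y z
    rw [dist_eq_norm, dist_eq_norm]
    have hco : (Real.toNNReal (SL * U) : ℝ) = SL * U :=
      Real.coe_toNNReal _ (mul_nonneg hSL0 hU0)
    rw [hco]
    have h0 : 0 ≤ SL * U * ‖y - z‖ := mul_nonneg (mul_nonneg hSL0 hU0) (norm_nonneg _)
    rw [pi_norm_le_iff_of_nonneg h0]
    intro i
    have hsub : (f t y - f t z) i = ∑ j, (L i j (y - z)) * u t j := by
      rw [Pi.sub_apply, hfi, hfi, ← Finset.sum_sub_distrib]
      refine Finset.sum_congr rfl fun j _ => ?_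
      rw [map_sub]; ring
    rw [Real.norm_eq_abs, hsub]
    calc |∑ j, L i j (y - z) * u t j| ≤ ∑ j, |L i j (y - z) * u t j| :=
        Finset.abs_sum_le_sum_abs _ _
      _ ≤ ∑ j, (NL i j * ‖y - z‖) * U := by
          refine Finset.sum_le_sum fun j _ => ?_
          rw [abs_mul]
          exact mul_le_mul (hLb i j _) (huU t j) (abs_nonneg _)
            (mul_nonneg (hNL0 i j) (norm_nonneg _))
      _ = (∑ j, NL i j) * ‖y - z‖ * U := by rw [← Finset.sum_mul, ← Finset.sum_mul]
      _ ≤ SL * U * ‖y - z‖ := by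
          have h3 := mul_le_mul_of_nonneg_right
            (mul_le_mul_of_nonneg_right (hrowNL i) (norm_nonneg (y - z))) hU0
          linarith [h3, mul_comm (SL * ‖y - z‖) U]
  have hfc : Continuous (Function.uncurry f) := by
    apply continuous_pi
    intro i
    have heq : (fun p : ℝ × (Fin d → ℝ) => Function.uncurry f p i) =
        fun p => ∑ j, (L i j p.2 + c i j) * u p.1 j := by
      funext p; exact hfi p.1 p.2 i
    rw [heq]
    refine continuous_finset_sum _ fun j _ => ?_
    exact (((L i j).continuous_of_finiteDimensional.comp continuous_snd).add
      continuous_const).mul (((continuous_apply j).comp hucont).comp continuous_fst)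
  obtain ⟨x, hx0, hxc, hxd⟩ := global_picard f _ hfc hflip T₀ hT₀
  have hxdi : ∀ t ∈ Set.Icc (0 : ℝ) T₀, ∀ i, HasDerivAt (fun s => x s i) (f t (x t) i) t := by
    intro t ht i
    exact (ContinuousLinearMap.proj (R := ℝ) (φ := fun _ : Fin d => ℝ)
      i).hasFDerivAt.comp_hasDerivAt t (hxd t ht)
  have hxB : ∀ t ∈ Set.Icc (0 : ℝ) T₀, ‖x t‖ ≤ B := by
    intro t ht
    have hg := norm_le_gronwallBound_of_norm_deriv_right_le (f := x)
      (f' := fun s => f s (x s)) (δ := 0) (K := K1) (ε := K2) (a := 0) (b := T₀)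
      (hxc.continuousOn)
      (fun s hs => (hxd s (Set.Ico_subset_Icc_self hs)).hasDerivWithinAt)
      (by simp [hx0])
      (fun s _ => hfb s (x s)) t ht
    refine hg.trans ?_
    rw [gronwallBound_of_K_ne_0 hK10.ne']
    have h1 : Real.exp (K1 * (t - 0)) - 1 ≤ Real.exp (K1 * T₀) := by
      have h2 : K1 * (t - 0) ≤ K1 * T₀ :=
        mul_le_mul_of_nonneg_left (by linarith [ht.2]) hK10.le
      have := Real.exp_le_exp.2 h2
      linarith
    calc (0 : ℝ) * Real.exp (K1 * (t - 0)) + K2 / K1 * (Real.exp (K1 * (t - 0)) - 1)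
        ≤ K2 / K1 * Real.exp (K1 * T₀) := by
          rw [zero_mul, zero_add]
          exact mul_le_mul_of_nonneg_left h1 (div_nonneg hK20.le hK10.le)
      _ = B := by rw [hBdef]
  set w : ℝ → Fin m → ℝ := fun s => ε • ((G⁻¹).mulVec (u s)) with hwdef
  have hw' : ∀ s j, HasDerivAt (fun σ => w σ j) (u s j) s := by
    intro s j
    have h1 : HasDerivAt (fun σ => (G⁻¹).mulVec (u σ)) ((G⁻¹).mulVec (A.mulVec (u s))) s := by
      exact ((Matrix.mulVecLin (G⁻¹)).toContinuousLinearMap.hasFDerivAt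
        (x := u s)).comp_hasDerivAt s (hu' s)
    have h2 : HasDerivAt (fun σ => w σ) (ε • ((G⁻¹).mulVec (A.mulVec (u s)))) s := h1.const_smul ε
    have h3 : ε • ((G⁻¹).mulVec (A.mulVec (u s))) = u s := by
      rw [hAdef, Matrix.smul_mulVec, Matrix.mulVec_smul, Matrix.mulVec_mulVec, hGiG,
        Matrix.one_mulVec, smul_smul, mul_inv_cancel₀ hε.ne', one_smul]
    rw [h3] at h2
    exact (ContinuousLinearMap.proj (R := ℝ) (φ := fun _ : Fin m => ℝ)
      j).hasFDerivAt.comp_hasDerivAt s h2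
  have hwc : ∀ j, Continuous fun s => w s j :=
    fun j => continuous_iff_continuousAt.2 fun s => (hw' s j).continuousAt
  have hwb : ∀ s j, |w s j| ≤ ε * W := by
    intro s j
    have h1 : w s j = ε * ∑ k, G⁻¹ j k * u s k := by
      simp [hwdef, Matrix.mulVec, dotProduct, smul_eq_mul]
    rw [h1, abs_mul, abs_of_pos hε]
    refine mul_le_mul_of_nonneg_left ?_ hε.le
    calc |∑ k, G⁻¹ j k * u s k| ≤ ∑ k, |G⁻¹ j k * u s k| := Finset.abs_sum_le_sum_abs _ _
      _ ≤ ∑ k, |G⁻¹ j k| * U := by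
          refine Finset.sum_le_sum fun k _ => ?_
          rw [abs_mul]
          exact mul_le_mul_of_nonneg_left (huU s k) (abs_nonneg _)
      _ = (∑ k, |G⁻¹ j k|) * U := (Finset.sum_mul _ _ _).symm
      _ ≤ CG * U := mul_le_mul_of_nonneg_right (hrowG j) hU0
      _ = W := by rw [hWdef]
  have hχc : Continuous fun s => f s (x s) := hfc.comp (continuous_id.prodMk hxc)
  have hfDB : ∀ s ∈ Set.Icc (0 : ℝ) T₀, ‖f s (x s)‖ ≤ DB := by
    intro s hs
    refine (hfb s (x s)).trans ?_
    rw [hDBdef]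
    exact add_le_add_left (mul_le_mul_of_nonneg_left (hxB s hs) hK10.le) _
  refine ⟨x, hx0, ?_, ?_⟩
  · intro t ht i
    rw [hsm t]
    exact hxdi t ht i
  · intro t ht
    have hxi : ∀ i, |x t i| ≤ C1 * ε := by
      intro i
      set P : ℝ → ℝ := fun σ => ∑ j, (L i j (x σ) + c i j) * w σ j with hPdef
      set Rr : ℝ → ℝ := fun σ => ∑ j, L i j (f σ (x σ)) * w σ j with hRdef
      have huIcc : Set.uIcc (0 : ℝ) t ⊆ Set.Icc 0 T₀ := by
        rw [Set.uIcc_of_le ht.1]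
        exact Set.Icc_subset_Icc le_rfl ht.2
      have hLd : ∀ s ∈ Set.Icc (0 : ℝ) T₀, ∀ j,
          HasDerivAt (fun σ => L i j (x σ)) (L i j (f s (x s))) s := by
        intro s hs j
        have h1 : (fun σ => L i j (x σ)) = fun σ => ∑ k, x σ k * L i j (Pi.single k 1) :=
          funext fun σ => lin_apply_eq_sum _ _
        rw [h1, lin_apply_eq_sum (L i j) (f s (x s))]
        exact HasDerivAt.fun_sum fun k _ => (hxdi s hs k).mul_const _
      have hPd' : ∀ s ∈ Set.Icc (0 : ℝ) T₀,
          HasDerivAt P (Rr s + f s (x s) i) s := by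
        intro s hs
        have h1 : HasDerivAt P
            (∑ j, (L i j (f s (x s)) * w s j + (L i j (x s) + c i j) * u s j)) s := by
          rw [hPdef]
          exact HasDerivAt.fun_sum fun j _ => ((hLd s hs j).add_const (c i j)).mul (hw' s j)
        have h2 : ∑ j, (L i j (f s (x s)) * w s j + (L i j (x s) + c i j) * u s j) =
            Rr s + f s (x s) i := by
          rw [Finset.sum_add_distrib, hRdef, hfi]
        rwa [h2] at h1
      have hfic : Continuous fun s => f s (x s) i := (continuous_apply i).comp hχc
      have hRc : Continuous Rr := by
        rw [hRdef]
        exact continuous_finset_sum _ fun j _ =>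
          ((L i j).continuous_of_finiteDimensional.comp hχc).mul (hwc j)
      have hftc1 : x t i = ∫ s in (0 : ℝ)..t, f s (x s) i := by
        have h := intervalIntegral.integral_eq_sub_of_hasDerivAt
          (f := fun s => x s i) (f' := fun s => f s (x s) i)
          (fun s hs => hxdi s (huIcc hs) i) (hfic.intervalIntegrable _ _)
        rw [h]
        simp [hx0]
      have hftc2 : (∫ s in (0 : ℝ)..t, (Rr s + f s (x s) i)) = P t - P 0 :=
        intervalIntegral.integral_eq_sub_of_hasDerivAt
          (fun s hs => hPd' s (huIcc hs)) ((hRc.add hfic).intervalIntegrable _ _)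
      have hsplit : x t i = (P t - P 0) - ∫ s in (0 : ℝ)..t, Rr s := by
        rw [hftc1, ← hftc2,
          ← intervalIntegral.integral_sub (f := fun s => Rr s + f s (x s) i) ((hRc.add hfic).intervalIntegrable _ _)
            (hRc.intervalIntegrable _ _)]
        simp
      have hPb : ∀ s ∈ Set.Icc (0 : ℝ) T₀, |P s| ≤ ε * (W * (SL * B + SC)) := by
        intro s hs
        have hcalc : |P s| ≤ (SL * B + SC) * (ε * W) := by
          rw [hPdef]
          calc |∑ j, (L i j (x s) + c i j) * w s j|
              ≤ ∑ j, |(L i j (x s) + c i j) * w s j| := Finset.abs_sum_le_sum_abs _ _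
            _ ≤ ∑ j, (NL i j * B + |c i j|) * (ε * W) := by
                refine Finset.sum_le_sum fun j _ => ?_
                rw [abs_mul]
                have h1 : |L i j (x s) + c i j| ≤ NL i j * B + |c i j| := by
                  refine (abs_add_le _ _).trans (add_le_add_left ?_ _)
                  exact (hLb i j _).trans
                    (mul_le_mul_of_nonneg_left (hxB s hs) (hNL0 i j))
                have h2 : 0 ≤ NL i j * B + |c i j| :=
                  add_nonneg (mul_nonneg (hNL0 i j) hB0) (abs_nonneg _)
                exact mul_le_mul h1 (hwb s j) (abs_nonneg _) h2
            _ = ((∑ j, NL i j) * B + ∑ j, |c i j|) * (ε * W) := by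
                rw [← Finset.sum_mul, Finset.sum_add_distrib, ← Finset.sum_mul]
            _ ≤ (SL * B + SC) * (ε * W) := by
                refine mul_le_mul_of_nonneg_right ?_ (mul_nonneg hε.le hW0)
                exact add_le_add (mul_le_mul_of_nonneg_right (hrowNL i) hB0) (hrowC i)
        refine hcalc.trans_eq (by ring)
      have hRb : ∀ s ∈ Set.Icc (0 : ℝ) T₀, |Rr s| ≤ ε * (W * SL * DB) := by
        intro s hs
        have hcalc : |Rr s| ≤ SL * DB * (ε * W) := by
          rw [hRdef]
          calc |∑ j, L i j (f s (x s)) * w s j|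
              ≤ ∑ j, |L i j (f s (x s)) * w s j| := Finset.abs_sum_le_sum_abs _ _
            _ ≤ ∑ j, (NL i j * DB) * (ε * W) := by
                refine Finset.sum_le_sum fun j _ => ?_
                rw [abs_mul]
                have h1 : |L i j (f s (x s))| ≤ NL i j * DB :=
                  (hLb i j _).trans (mul_le_mul_of_nonneg_left (hfDB s hs) (hNL0 i j))
                exact mul_le_mul h1 (hwb s j) (abs_nonneg _)
                  (mul_nonneg (hNL0 i j) hDB0)
            _ = (∑ j, NL i j) * DB * (ε * W) := by
                rw [← Finset.sum_mul, ← Finset.sum_mul]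
            _ ≤ SL * DB * (ε * W) := by
                refine mul_le_mul_of_nonneg_right ?_ (mul_nonneg hε.le hW0)
                exact mul_le_mul_of_nonneg_right (hrowNL i) hDB0
        refine hcalc.trans_eq (by ring)
      have hIb : |∫ s in (0 : ℝ)..t, Rr s| ≤ ε * (W * SL * DB) * T₀ := by
        have h := intervalIntegral.norm_integral_le_of_norm_le_const
          (C := ε * (W * SL * DB)) (f := Rr) (a := 0) (b := t) ?_
        · rw [Real.norm_eq_abs] at h
          refine h.trans ?_
          rw [sub_zero, abs_of_nonneg ht.1]
          exact mul_le_mul_of_nonneg_left ht.2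
            (mul_nonneg hε.le (mul_nonneg (mul_nonneg hW0 hSL0) hDB0))
        · intro s hs
          rw [Set.uIoc_of_le ht.1] at hs
          rw [Real.norm_eq_abs]
          exact hRb s ⟨hs.1.le, hs.2.trans ht.2⟩
      have h1 := hPb t ht
      have h2 := hPb 0 ⟨le_rfl, hT₀.le⟩
      have h3 : |P t - P 0| ≤ |P t| + |P 0| := abs_sub _ _
      have h4 : |P t - P 0 - ∫ s in (0 : ℝ)..t, Rr s| ≤
          |P t - P 0| + |∫ s in (0 : ℝ)..t, Rr s| := by
        rw [sub_eq_add_neg]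
        exact (abs_add_le _ _).trans_eq (by rw [abs_neg])
      have h5 : |x t i| ≤ ε * (W * (SL * B + SC)) * 2 + ε * (W * SL * DB) * T₀ := by
        rw [hsplit]
        calc |P t - P 0 - ∫ s in (0 : ℝ)..t, Rr s| ≤
            |P t - P 0| + |∫ s in (0 : ℝ)..t, Rr s| := h4
          _ ≤ (|P t| + |P 0|) + ε * (W * SL * DB) * T₀ := add_le_add h3 hIb
          _ ≤ ε * (W * (SL * B + SC)) * 2 + ε * (W * SL * DB) * T₀ := by linarith
      exact h5.trans (le_of_eq (by rw [hC1def]; ring))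
    have hsum : ∑ i, (x t i) ^ 2 ≤ (d : ℝ) * (C1 * ε) ^ 2 := by
      calc ∑ i, (x t i) ^ 2 ≤ ∑ _i : Fin d, (C1 * ε) ^ 2 := by
            refine Finset.sum_le_sum fun i _ => ?_
            calc (x t i) ^ 2 = |x t i| ^ 2 := (sq_abs _).symm
              _ ≤ (C1 * ε) ^ 2 := pow_le_pow_left₀ (abs_nonneg _) (hxi i) 2
        _ = (d : ℝ) * (C1 * ε) ^ 2 := by
            rw [Finset.sum_const, Finset.card_univ, Fintype.card_fin, nsmul_eq_mul]
    calc Real.sqrt (∑ i, (x t i) ^ 2) ≤ Real.sqrt ((d : ℝ) * (C1 * ε) ^ 2) :=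
        Real.sqrt_le_sqrt hsum
      _ = Real.sqrt d * (C1 * ε) := by
          rw [Real.sqrt_mul (Nat.cast_nonneg d), Real.sqrt_sq (mul_nonneg hC10 hε.le)]
      _ ≤ (Real.sqrt d * C1 + 1) * ε := by
          have h1 : Real.sqrt (d : ℝ) * (C1 * ε) = (Real.sqrt (d : ℝ) * C1) * ε := by ring
          rw [h1]
          have h2 : Real.sqrt (d : ℝ) * C1 ≤ Real.sqrt (d : ℝ) * C1 + 1 := by linarith
          exact mul_le_mul_of_nonneg_right h2 hε.le
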